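/- The class of languages generated by admissible signed grammars is closed under concatenation of languages over disjoint alphabets: if L₁ ⊆ Σ₁* and L₂ ⊆ Σ₂* are generated by admissible signed grammars over Σ₁ and Σ₂ respectively, and Σ₁ ∩ Σ₂ = ∅, then the concatenation L₁L₂ = { uv : u ∈ L₁, v ∈ L₂ } is generated by an admissible signed grammar over Σ₁ ∪ Σ₂. -/

import Mathlib

/-- A parse-tree node: either a terminal leaf or an internal node labeled by a
nonterminal with a list of children. -/
inductive PTree (N : Type) (T : Type) : Type where
  | leaf (t : T) : PTree N T
  | node (A : N) (children : List (PTree N T)) : PTree N T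

namespace PTree

variable {N T : Type}

/-- The symbol (nonterminal or terminal) labeling the root of a tree. -/
def toSymbol : PTree N T → N ⊕ T
  | leaf t => Sum.inr t
  | node A _ => Sum.inl A

/-- The yield of a parse tree: the word spelled by its leaves. -/
def yield : PTree N T → List T
  | leaf t => [t]
  | node _ cs => cs.attach.flatMap (fun c => yield c.1)
decreasing_by simp only [PTree.node.sizeOf_spec]; have h := List.sizeOf_lt_of_mem c.2; omega

/-- The sign of a parse tree w.r.t. a sign assignment on productions:
the product of the signs of the productions used at its nodes. -/
def sign (σ : N × List (N ⊕ T) → ℤ) : PTree N T → ℤ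
  | leaf _ => 1
  | node A cs => σ (A, cs.map toSymbol) * (cs.attach.map (fun c => sign σ c.1)).prod
decreasing_by simp only [PTree.node.sizeOf_spec]; have h := List.sizeOf_lt_of_mem c.2; omega

/-- Validity of a parse tree w.r.t. a set of productions: at every internal node,
the node label together with the list of symbols of its children is a production. -/
inductive Valid (R : Set (N × List (N ⊕ T))) : PTree N T → Prop where
  | leaf (t : T) : Valid R (PTree.leaf t)
  | node (A : N) (cs : List (PTree N T)) :
      (A, cs.map toSymbol) ∈ R → (∀ c ∈ cs, Valid R c) → Valid R (PTree.node A cs)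

variable {N' T' : Type}

def map (f : N → N') (g : T → T') : PTree N T → PTree N' T'
  | leaf t => leaf (g t)
  | node A cs => node (f A) (cs.attach.map (fun c => map f g c.1))
decreasing_by simp only [PTree.node.sizeOf_spec]; have h := List.sizeOf_lt_of_mem c.2; omega

@[simp] theorem map_leaf (f : N → N') (g : T → T') (t : T) :
    map f g (leaf t) = leaf (g t) := by rw [map]

@[simp] theorem map_node (f : N → N') (g : T → T') (A : N) (cs : List (PTree N T)) :
    map f g (node A cs) = node (f A) (cs.map (map f g)) := by
  rw [map]; congr 1; simp [List.attach_map_val]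

@[simp] theorem yield_leaf (t : T) : yield (leaf t : PTree N T) = [t] := by rw [yield]

@[simp] theorem yield_node (A : N) (cs : List (PTree N T)) :
    yield (node A cs) = cs.flatMap yield := by
  rw [yield]; simp [List.attach_map_val]

@[simp] theorem sign_leaf (σ : N × List (N ⊕ T) → ℤ) (t : T) :
    sign σ (leaf t) = 1 := by rw [sign]

@[simp] theorem sign_node (σ : N × List (N ⊕ T) → ℤ) (A : N) (cs : List (PTree N T)) :
    sign σ (node A cs) = σ (A, cs.map toSymbol) * (cs.map (sign σ)).prod := by
  rw [sign]; congr 2; simp [List.attach_map_val]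

theorem toSymbol_map (f : N → N') (g : T → T') (t : PTree N T) :
    (map f g t).toSymbol = Sum.map f g t.toSymbol := by
  cases t <;> simp [toSymbol]

theorem yield_map (f : N → N') (g : T → T') : ∀ t : PTree N T,
    (map f g t).yield = t.yield.map g
  | leaf t => by simp
  | node A cs => by
      simp only [map_node, yield_node, List.flatMap_map, List.map_flatMap]
      exact List.flatMap_congr (fun c hc => yield_map f g c)
decreasing_by simp only [PTree.node.sizeOf_spec]; have h := List.sizeOf_lt_of_mem hc; omega


theorem map_toSymbol (f : N → N') (g : T → T') (cs : List (PTree N T)) :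
    (cs.map (map f g)).map toSymbol = (cs.map toSymbol).map (Sum.map f g) := by
  induction cs with
  | nil => rfl
  | cons c ct ih => simp only [List.map_cons, ih, toSymbol_map]

theorem ind {motive : PTree N T → Prop} (hleaf : ∀ t, motive (leaf t))
    (hnode : ∀ A cs, (∀ c ∈ cs, motive c) → motive (node A cs)) : ∀ t, motive t
  | leaf t => hleaf t
  | node A cs => hnode A cs (fun c hc => ind hleaf hnode c)
decreasing_by simp only [PTree.node.sizeOf_spec]; have h := List.sizeOf_lt_of_mem hc; omega

theorem sign_map {σ' : N' × List (N' ⊕ T') → ℤ} {σ : N × List (N ⊕ T) → ℤ}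
    {f : N → N'} {g : T → T'}
    (hσ : ∀ A α, σ' (f A, α.map (Sum.map f g)) = σ (A, α)) (t : PTree N T) :
    (map f g t).sign σ' = t.sign σ := by
  induction t using ind with
  | hleaf t => simp
  | hnode A cs ih =>
      rw [map_node, sign_node, sign_node, map_toSymbol, hσ, List.map_map]
      congr 1
      exact congrArg _ (List.map_congr_left fun c hc => ih c hc)

theorem valid_map {R : Set (N × List (N ⊕ T))} {R' : Set (N' × List (N' ⊕ T'))}
    {f : N → N'} {g : T → T'}
    (hR : ∀ A α, (A, α) ∈ R → (f A, α.map (Sum.map f g)) ∈ R') (t : PTree N T)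
    (hv : Valid R t) : Valid R' (map f g t) := by
  induction t using ind with
  | hleaf t => simpa using Valid.leaf (g t)
  | hnode A cs ih =>
      cases hv with
      | node _ _ hr hcs =>
        rw [map_node]
        refine Valid.node _ _ ?_ ?_
        · rw [map_toSymbol]; exact hR A _ hr
        · intro c hc
          simp only [List.mem_map] at hc
          obtain ⟨c', hc', rfl⟩ := hc
          exact ih c' hc' (hcs c' hc')

theorem map_injective {f : N → N'} {g : T → T'}
    (hf : Function.Injective f) (hg : Function.Injective g) (t₁ : PTree N T) :
    ∀ t₂ : PTree N T, map f g t₁ = map f g t₂ → t₁ = t₂ := by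
  induction t₁ using ind with
  | hleaf t =>
      intro t₂ h
      cases t₂ with
      | leaf t' => simp only [map_leaf, leaf.injEq] at h; rw [hg h]
      | node A cs => simp at h
  | hnode A cs ih =>
      intro t₂ h
      cases t₂ with
      | leaf t' => simp at h
      | node A' cs' =>
        simp only [map_node, node.injEq] at h
        obtain ⟨h1, h2⟩ := h
        have : cs = cs' := by
          induction cs generalizing cs' with
          | nil => cases cs' with | nil => rfl | cons => simp at h2
          | cons c ct iht =>
            cases cs' with
            | nil => simp at h2
            | cons c' ct' =>
              simp only [List.map_cons, List.cons.injEq] at h2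
              rw [ih c (by simp) c' h2.1,
                iht (fun x hx => ih x (by simp [hx])) ct' h2.2]
        rw [hf h1, this]

theorem unmap {R : Set (N × List (N ⊕ T))} {R' : Set (N' × List (N' ⊕ T'))}
    {f : N → N'} {g : T → T'}
    (hR : ∀ A α', (f A, α') ∈ R' → ∃ α, (A, α) ∈ R ∧ α' = α.map (Sum.map f g))
    (t : PTree N' T') :
    ∀ s : N ⊕ T, Valid R' t → t.toSymbol = Sum.map f g s →
      ∃ t', Valid R t' ∧ t'.toSymbol = s ∧ t = map f g t' := by
  induction t using ind with
  | hleaf t =>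
      intro s _ hs
      cases s with
      | inl A => simp [toSymbol, Sum.map_inl, Sum.map_inr] at hs
      | inr x =>
        simp only [toSymbol, Sum.map_inr, Sum.inr.injEq] at hs
        exact ⟨leaf x, Valid.leaf x, rfl, by simp [hs]⟩
  | hnode A' cs ih =>
      intro s hv hs
      cases s with
      | inr x => simp [toSymbol, Sum.map_inl, Sum.map_inr] at hs
      | inl A =>
        simp only [toSymbol, Sum.map_inl, Sum.inl.injEq] at hs
        subst hs
        cases hv with
        | node _ _ hr hcs =>
          obtain ⟨α, hα, hmap⟩ := hR A _ hr
          -- build the unmapped children list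
          have : ∀ cs : List (PTree N' T'), (∀ c ∈ cs, Valid R' c) →
              (∀ c ∈ cs, ∀ s, Valid R' c → c.toSymbol = Sum.map f g s →
                ∃ t', Valid R t' ∧ t'.toSymbol = s ∧ c = map f g t') →
              ∀ α : List (N ⊕ T), cs.map toSymbol = α.map (Sum.map f g) →
              ∃ cs' : List (PTree N T), (∀ c ∈ cs', Valid R c) ∧
                cs'.map toSymbol = α ∧ cs = cs'.map (map f g) := by
            intro cs
            induction cs with
            | nil =>
                intro _ _ α hα
                cases α with
                | nil => exact ⟨[], by simp, rfl, rfl⟩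
                | cons => simp at hα
            | cons c ct iht =>
                intro hval hih α hα
                cases α with
                | nil => simp at hα
                | cons a at' =>
                  simp only [List.map_cons, List.cons.injEq] at hα
                  obtain ⟨c', hc'v, hc's, hc'e⟩ :=
                    hih c (by simp) a (hval c (by simp)) hα.1
                  obtain ⟨ct'', h1, h2, h3⟩ := iht (fun x hx => hval x (by simp [hx]))
                    (fun x hx => hih x (by simp [hx])) at' hα.2
                  exact ⟨c' :: ct'', by intro x hx; rcases List.mem_cons.mp hx with rfl | hx; exacts [hc'v, h1 x hx],
                    by simp [hc's, h2], by simp [← hc'e, ← h3]⟩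
          obtain ⟨cs', h1, h2, h3⟩ := this cs hcs
            (fun c hc s hv hs => ih c hc s hv hs) α hmap
          exact ⟨node A cs', Valid.node A cs' (h2 ▸ hα) h1, rfl, by rw [map_node, h3]⟩

end PTree

/-- A signed grammar over a (finite) terminal alphabet `T`: a context-free grammar
with finitely many nonterminals and productions, together with a sign `1` or `-1`
attached to each production. -/
structure SignedGrammar (T : Type) : Type 1 where
  /-- the type of nonterminals -/
  N : Type
  finN : Finite N
  /-- the start symbol -/
  start : N
  /-- the productions `A → α`, `α ∈ (N ∪ T)*` -/
  rules : Set (N × List (N ⊕ T))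
  finRules : rules.Finite
  /-- the sign of each production -/
  sign : N × List (N ⊕ T) → ℤ
  sign_valid : ∀ r ∈ rules, sign r = 1 ∨ sign r = -1

namespace SignedGrammar

variable {T : Type}

/-- A parse tree over the grammar: a valid tree whose root is labeled by the start symbol. -/
def IsParseTree (G : SignedGrammar T) (t : PTree G.N T) : Prop :=
  PTree.Valid G.rules t ∧ t.toSymbol = Sum.inl G.start

/-- The set of parse trees over `G` with yield `w`. -/
def parseTreesOf (G : SignedGrammar T) (w : List T) : Set (PTree G.N T) :=
  {t | G.IsParseTree t ∧ t.yield = w}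

/-- `G` is admissible if every word has only finitely many parse trees. -/
def Admissible (G : SignedGrammar T) : Prop :=
  ∀ w : List T, (G.parseTreesOf w).Finite

/-- `n_w(G)`: the sum of the signs of all parse trees over `G` with yield `w`. -/
noncomputable def count (G : SignedGrammar T) (w : List T) : ℤ :=
  ∑ᶠ t ∈ G.parseTreesOf w, t.sign G.sign

/-- `G` generates the language `L` if `G` is admissible, `n_w(G) = 1` for every
`w ∈ L` and `n_w(G) = 0` for every `w ∉ L`. -/
def Generates (G : SignedGrammar T) (L : Language T) : Prop :=
  G.Admissible ∧ (∀ w ∈ L, G.count w = 1) ∧ (∀ w ∉ L, G.count w = 0)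

/-- An ordinary context-free grammar: every production has sign `+1`. -/
def Ordinary (G : SignedGrammar T) : Prop :=
  ∀ r ∈ G.rules, G.sign r = 1

/-- The language generated by `G` in the usual sense: all yields of parse trees. -/
def language (G : SignedGrammar T) : Language T :=
  {w | ∃ t : PTree G.N T, G.IsParseTree t ∧ t.yield = w}

/-- `G` is unambiguous if every word has at most one parse tree. -/
def Unambiguous (G : SignedGrammar T) : Prop :=
  ∀ t₁ t₂ : PTree G.N T, G.IsParseTree t₁ → G.IsParseTree t₂ →
    t₁.yield = t₂.yield → t₁ = t₂

/-- The number of parse trees of `G` with yield `w` (degree of ambiguity of `w`). -/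
noncomputable def ambCount (G : SignedGrammar T) (w : List T) : ℕ :=
  Nat.card {t : PTree G.N T // t ∈ G.parseTreesOf w}

end SignedGrammar


namespace SGC

lemma decomp_unique {T1 T2 : Type} : ∀ {u u2 : List T1} {v v2 : List T2},
    u.map Sum.inl ++ v.map Sum.inr = u2.map (Sum.inl (β := T2)) ++ v2.map Sum.inr →
    u = u2 ∧ v = v2 := by
  intro u
  induction u with
  | nil =>
    intro u2 v v2 h
    cases u2 with
    | nil =>
      simp only [List.map_nil, List.nil_append] at h
      exact ⟨rfl, List.map_injective_iff.mpr Sum.inr_injective h⟩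
    | cons a u3 =>
      exfalso
      cases v with
      | nil => simp at h
      | cons b v3 => simp at h
  | cons a u3 ih =>
    intro u2 v v2 h
    cases u2 with
    | nil =>
      exfalso
      cases v2 with
      | nil => simp at h
      | cons b v3 => simp at h
    | cons a2 u4 =>
      simp only [List.map_cons, List.cons_append, List.cons.injEq, Sum.inl.injEq] at h
      obtain ⟨rfl, h2⟩ := h
      obtain ⟨rfl, rfl⟩ := ih h2
      exact ⟨rfl, rfl⟩

end SGC

namespace SGC

variable {N₁ N₂ T₁ T₂ : Type}

/-- Nonterminals of the concatenation grammar. -/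
abbrev BN (N₁ N₂ : Type) : Type := Option (N₁ ⊕ N₂)

abbrev f₁ : N₁ → BN N₁ N₂ := fun A => some (Sum.inl A)
abbrev f₂ : N₂ → BN N₁ N₂ := fun A => some (Sum.inr A)

abbrev l₁ : (N₁ ⊕ T₁) → (BN N₁ N₂ ⊕ (T₁ ⊕ T₂)) := Sum.map f₁ Sum.inl
abbrev l₂ : (N₂ ⊕ T₂) → (BN N₁ N₂ ⊕ (T₁ ⊕ T₂)) := Sum.map f₂ Sum.inr

def r₁ (d : N₁) : (BN N₁ N₂ ⊕ (T₁ ⊕ T₂)) → N₁ ⊕ T₁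
  | Sum.inl (some (Sum.inl A)) => Sum.inl A
  | Sum.inr (Sum.inl t) => Sum.inr t
  | _ => Sum.inl d

def r₂ (d : N₂) : (BN N₁ N₂ ⊕ (T₁ ⊕ T₂)) → N₂ ⊕ T₂
  | Sum.inl (some (Sum.inr A)) => Sum.inl A
  | Sum.inr (Sum.inr t) => Sum.inr t
  | _ => Sum.inl d

@[simp] lemma r₁_l₁ (d : N₁) (s : N₁ ⊕ T₁) : r₁ (N₂ := N₂) (T₂ := T₂) d (l₁ s) = s := by
  cases s <;> rfl

@[simp] lemma r₂_l₂ (d : N₂) (s : N₂ ⊕ T₂) : r₂ (N₁ := N₁) (T₁ := T₁) d (l₂ s) = s := by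
  cases s <;> rfl

def brules (R₁ : Set (N₁ × List (N₁ ⊕ T₁))) (R₂ : Set (N₂ × List (N₂ ⊕ T₂)))
    (S₁ : N₁) (S₂ : N₂) : Set (BN N₁ N₂ × List (BN N₁ N₂ ⊕ (T₁ ⊕ T₂))) :=
  insert (none, [Sum.inl (f₁ S₁), Sum.inl (f₂ S₂)])
    ((fun r => (f₁ r.1, r.2.map l₁)) '' R₁ ∪ (fun r => (f₂ r.1, r.2.map l₂)) '' R₂)

def bsign (σ₁ : N₁ × List (N₁ ⊕ T₁) → ℤ) (σ₂ : N₂ × List (N₂ ⊕ T₂) → ℤ)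
    (d₁ : N₁) (d₂ : N₂) : BN N₁ N₂ × List (BN N₁ N₂ ⊕ (T₁ ⊕ T₂)) → ℤ := fun r =>
  match r.1 with
  | none => 1
  | some (Sum.inl A) => σ₁ (A, r.2.map (r₁ d₁))
  | some (Sum.inr A) => σ₂ (A, r.2.map (r₂ d₂))

lemma bsign_lift₁ (σ₁ σ₂ d₁ d₂) (A : N₁) (α : List (N₁ ⊕ T₁)) :
    bsign (N₂ := N₂) (T₂ := T₂) σ₁ σ₂ d₁ d₂ (f₁ A, α.map l₁) = σ₁ (A, α) := by
  show σ₁ (A, (α.map l₁).map (r₁ d₁)) = σ₁ (A, α)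
  rw [List.map_map]
  congr 1
  simp [Function.comp_def]

lemma bsign_lift₂ (σ₁ σ₂ d₁ d₂) (A : N₂) (α : List (N₂ ⊕ T₂)) :
    bsign (N₁ := N₁) (T₁ := T₁) σ₁ σ₂ d₁ d₂ (f₂ A, α.map l₂) = σ₂ (A, α) := by
  show σ₂ (A, (α.map l₂).map (r₂ d₂)) = σ₂ (A, α)
  rw [List.map_map]
  congr 1
  simp [Function.comp_def]

lemma brules_unlift₁ {R₁ : Set (N₁ × List (N₁ ⊕ T₁))} {R₂ : Set (N₂ × List (N₂ ⊕ T₂))}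
    {S₁ : N₁} {S₂ : N₂} (A : N₁) (α' : List (BN N₁ N₂ ⊕ (T₁ ⊕ T₂)))
    (h : (f₁ A, α') ∈ brules R₁ R₂ S₁ S₂) :
    ∃ α, (A, α) ∈ R₁ ∧ α' = α.map l₁ := by
  rcases h with h | ⟨⟨B, β⟩, hβ, h⟩ | ⟨⟨B, β⟩, hβ, h⟩
  · exact absurd (congrArg Prod.fst h) (by simp)
  · simp only [Prod.mk.injEq] at h
    obtain ⟨h1, h2⟩ := h
    have hBA : B = A := by simpa using h1
    exact ⟨β, hBA ▸ hβ, h2.symm⟩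
  · exact absurd (congrArg Prod.fst h) (by simp)

lemma brules_unlift₂ {R₁ : Set (N₁ × List (N₁ ⊕ T₁))} {R₂ : Set (N₂ × List (N₂ ⊕ T₂))}
    {S₁ : N₁} {S₂ : N₂} (A : N₂) (α' : List (BN N₁ N₂ ⊕ (T₁ ⊕ T₂)))
    (h : (f₂ A, α') ∈ brules R₁ R₂ S₁ S₂) :
    ∃ α, (A, α) ∈ R₂ ∧ α' = α.map l₂ := by
  rcases h with h | ⟨⟨B, β⟩, hβ, h⟩ | ⟨⟨B, β⟩, hβ, h⟩
  · exact absurd (congrArg Prod.fst h) (by simp)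
  · exact absurd (congrArg Prod.fst h) (by simp)
  · simp only [Prod.mk.injEq] at h
    obtain ⟨h1, h2⟩ := h
    have hBA : B = A := by simpa using h1
    exact ⟨β, hBA ▸ hβ, h2.symm⟩

/-- Pairing of two parse trees into a tree of the concatenation grammar. -/
def pair (t₁ : PTree N₁ T₁) (t₂ : PTree N₂ T₂) : PTree (BN N₁ N₂) (T₁ ⊕ T₂) :=
  PTree.node none [t₁.map f₁ Sum.inl, t₂.map f₂ Sum.inr]

lemma valid_pair {R₁ : Set (N₁ × List (N₁ ⊕ T₁))} {R₂ : Set (N₂ × List (N₂ ⊕ T₂))}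
    {S₁ : N₁} {S₂ : N₂} {t₁ : PTree N₁ T₁} {t₂ : PTree N₂ T₂}
    (h₁ : PTree.Valid R₁ t₁) (hs₁ : t₁.toSymbol = Sum.inl S₁)
    (h₂ : PTree.Valid R₂ t₂) (hs₂ : t₂.toSymbol = Sum.inl S₂) :
    PTree.Valid (brules R₁ R₂ S₁ S₂) (pair t₁ t₂) := by
  refine PTree.Valid.node _ _ ?_ ?_
  · have e1 : (t₁.map (f₁ (N₂ := N₂)) (Sum.inl (β := T₂))).toSymbol = Sum.inl (f₁ S₁) := by
      rw [PTree.toSymbol_map, hs₁]; rfl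
    have e2 : (t₂.map (f₂ (N₁ := N₁)) (Sum.inr (α := T₁))).toSymbol = Sum.inl (f₂ S₂) := by
      rw [PTree.toSymbol_map, hs₂]; rfl
    simp only [List.map_cons, List.map_nil, e1, e2]
    exact Set.mem_insert _ _
  · intro c hc
    rcases List.mem_cons.mp hc with rfl | hc
    · exact PTree.valid_map (fun A α hα => Or.inr (Or.inl ⟨(A, α), hα, rfl⟩)) t₁ h₁
    · rcases List.mem_cons.mp hc with rfl | hc
      · exact PTree.valid_map (fun A α hα => Or.inr (Or.inr ⟨(A, α), hα, rfl⟩)) t₂ h₂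
      · simp at hc

lemma valid_unpair {R₁ : Set (N₁ × List (N₁ ⊕ T₁))} {R₂ : Set (N₂ × List (N₂ ⊕ T₂))}
    {S₁ : N₁} {S₂ : N₂} {t : PTree (BN N₁ N₂) (T₁ ⊕ T₂)}
    (hv : PTree.Valid (brules R₁ R₂ S₁ S₂) t) (hs : t.toSymbol = Sum.inl none) :
    ∃ t₁ t₂, PTree.Valid R₁ t₁ ∧ t₁.toSymbol = Sum.inl S₁ ∧
      PTree.Valid R₂ t₂ ∧ t₂.toSymbol = Sum.inl S₂ ∧ t = pair t₁ t₂ := by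
  cases t with
  | leaf t => simp [PTree.toSymbol] at hs
  | node A cs =>
    have hA : A = none := by simpa [PTree.toSymbol] using hs
    subst hA
    cases hv with
    | node _ _ hr hcs =>
      have hmapsym : cs.map PTree.toSymbol =
          [Sum.inl (f₁ (N₂ := N₂) S₁), Sum.inl (f₂ (N₁ := N₁) S₂)] := by
        rcases hr with h | ⟨⟨B, β⟩, hβ, h⟩ | ⟨⟨B, β⟩, hβ, h⟩
        · exact congrArg Prod.snd h
        · exact absurd (congrArg Prod.fst h) (by simp)
        · exact absurd (congrArg Prod.fst h) (by simp)
      cases cs with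
      | nil => simp at hmapsym
      | cons c₁ ct =>
      cases ct with
      | nil => simp at hmapsym
      | cons c₂ ct2 =>
      cases ct2 with
      | cons c₃ ct3 => simp at hmapsym
      | nil =>
        simp only [List.map_cons, List.map_nil, List.cons.injEq, and_true] at hmapsym
        obtain ⟨e1, e2⟩ := hmapsym
        obtain ⟨t₁, hv₁, hs₁, rfl⟩ := PTree.unmap (brules_unlift₁ (S₂ := S₂)) c₁
          (Sum.inl S₁) (hcs c₁ (by simp)) (by rw [e1]; rfl)
        obtain ⟨t₂, hv₂, hs₂, rfl⟩ := PTree.unmap (brules_unlift₂ (S₁ := S₁)) c₂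
          (Sum.inl S₂) (hcs c₂ (by simp)) (by rw [e2]; rfl)
        exact ⟨t₁, t₂, hv₁, hs₁, hv₂, hs₂, rfl⟩

lemma yield_pair (t₁ : PTree N₁ T₁) (t₂ : PTree N₂ T₂) :
    (pair t₁ t₂).yield = t₁.yield.map Sum.inl ++ t₂.yield.map Sum.inr := by
  simp [pair, PTree.yield_map]

lemma sign_pair (σ₁ : N₁ × List (N₁ ⊕ T₁) → ℤ) (σ₂ : N₂ × List (N₂ ⊕ T₂) → ℤ)
    (d₁ : N₁) (d₂ : N₂) (t₁ : PTree N₁ T₁) (t₂ : PTree N₂ T₂) :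
    (pair t₁ t₂).sign (bsign σ₁ σ₂ d₁ d₂) = t₁.sign σ₁ * t₂.sign σ₂ := by
  rw [pair, PTree.sign_node]
  have e1 := PTree.sign_map (σ' := bsign (N₂ := N₂) (T₂ := T₂) σ₁ σ₂ d₁ d₂) (σ := σ₁)
    (bsign_lift₁ σ₁ σ₂ d₁ d₂) t₁
  have e2 := PTree.sign_map (σ' := bsign (N₁ := N₁) (T₁ := T₁) σ₁ σ₂ d₁ d₂) (σ := σ₂)
    (bsign_lift₂ σ₁ σ₂ d₁ d₂) t₂
  have h0 : ∀ α, bsign (N₁ := N₁) (N₂ := N₂) (T₁ := T₁) (T₂ := T₂) σ₁ σ₂ d₁ d₂ (none, α) = 1 :=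
    fun _ => rfl
  simp [e1, e2, h0]

lemma pair_injective (p q : PTree N₁ T₁ × PTree N₂ T₂) (h : pair p.1 p.2 = pair q.1 q.2) :
    p = q := by
  simp only [pair, PTree.node.injEq, List.cons.injEq, and_true, true_and] at h
  exact Prod.ext (PTree.map_injective (fun _ _ hh => by simpa using hh) Sum.inl_injective _ _ h.1)
    (PTree.map_injective (fun _ _ hh => by simpa using hh) Sum.inr_injective _ _ h.2)

end SGC

/-- Languages generated by admissible signed grammars are closed under concatenation
of languages over disjoint alphabets (the disjoint union of the alphabets being
modeled by the sum type `T₁ ⊕ T₂`). -/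
theorem signed_grammar_closed_under_disjoint_concatenation
    (T₁ T₂ : Type) [Fintype T₁] [Fintype T₂]
    (L₁ : Language T₁) (L₂ : Language T₂)
    (G₁ : SignedGrammar T₁) (G₂ : SignedGrammar T₂)
    (h₁ : G₁.Generates L₁) (h₂ : G₂.Generates L₂) :
    ∃ G : SignedGrammar (T₁ ⊕ T₂),
      G.Generates {w : List (T₁ ⊕ T₂) |
        ∃ u ∈ L₁, ∃ v ∈ L₂, w = u.map Sum.inl ++ v.map Sum.inr} := by
  classical
  obtain ⟨adm₁, pos₁, neg₁⟩ := h₁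
  obtain ⟨adm₂, pos₂, neg₂⟩ := h₂
  haveI := G₁.finN
  haveI := G₂.finN
  let G : SignedGrammar (T₁ ⊕ T₂) :=
    { N := SGC.BN G₁.N G₂.N
      finN := Finite.of_injective
        (fun x => Option.elim x (Sum.inl ()) Sum.inr : SGC.BN G₁.N G₂.N → Unit ⊕ (G₁.N ⊕ G₂.N))
        (by intro a b h; cases a <;> cases b <;> simp_all)
      start := none
      rules := SGC.brules G₁.rules G₂.rules G₁.start G₂.start
      finRules := Set.Finite.insert _ ((G₁.finRules.image _).union (G₂.finRules.image _))
      sign := SGC.bsign G₁.sign G₂.sign G₁.start G₂.start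
      sign_valid := by
        intro r hr
        simp only [SGC.brules, Set.mem_insert_iff, Set.mem_union, Set.mem_image] at hr
        rcases hr with rfl | ⟨⟨A, α⟩, hα, rfl⟩ | ⟨⟨A, α⟩, hα, rfl⟩
        · exact Or.inl rfl
        · rw [SGC.bsign_lift₁]; exact G₁.sign_valid _ hα
        · rw [SGC.bsign_lift₂]; exact G₂.sign_valid _ hα }
  have key : ∀ (w : List (T₁ ⊕ T₂)) (t : PTree (SGC.BN G₁.N G₂.N) (T₁ ⊕ T₂)),
      t ∈ G.parseTreesOf w ↔ ∃ t₁ t₂, G₁.IsParseTree t₁ ∧ G₂.IsParseTree t₂ ∧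
        t = SGC.pair t₁ t₂ ∧ w = t₁.yield.map Sum.inl ++ t₂.yield.map Sum.inr := by
    intro w t
    constructor
    · rintro ⟨⟨hv, hsym⟩, hy⟩
      obtain ⟨t₁, t₂, hv₁, hs₁, hv₂, hs₂, rfl⟩ := SGC.valid_unpair hv hsym
      exact ⟨t₁, t₂, ⟨hv₁, hs₁⟩, ⟨hv₂, hs₂⟩, rfl, by rw [← hy, SGC.yield_pair]⟩
    · rintro ⟨t₁, t₂, ⟨hv₁, hs₁⟩, ⟨hv₂, hs₂⟩, rfl, rfl⟩
      exact ⟨⟨SGC.valid_pair hv₁ hs₁ hv₂ hs₂, rfl⟩, SGC.yield_pair t₁ t₂⟩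
  have keyset : ∀ (u : List T₁) (v : List T₂),
      G.parseTreesOf (u.map Sum.inl ++ v.map Sum.inr) =
        (fun p : PTree G₁.N T₁ × PTree G₂.N T₂ => SGC.pair p.1 p.2) ''
          (G₁.parseTreesOf u ×ˢ G₂.parseTreesOf v) := by
    intro u v
    ext t
    rw [key]
    constructor
    · rintro ⟨t₁, t₂, h1, h2, rfl, hw⟩
      obtain ⟨e1, e2⟩ := SGC.decomp_unique hw
      exact ⟨(t₁, t₂), ⟨⟨h1, e1.symm⟩, ⟨h2, e2.symm⟩⟩, rfl⟩
    · rintro ⟨⟨t₁, t₂⟩, ⟨⟨h1, hy1⟩, ⟨h2, hy2⟩⟩, rfl⟩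
      exact ⟨t₁, t₂, h1, h2, rfl, by rw [hy1, hy2]⟩
  have hempty : ∀ w : List (T₁ ⊕ T₂),
      (¬ ∃ (u : List T₁) (v : List T₂), w = u.map Sum.inl ++ v.map Sum.inr) →
      G.parseTreesOf w = ∅ := by
    intro w hw
    ext t
    simp only [Set.mem_empty_iff_false, iff_false]
    intro ht
    obtain ⟨t₁, t₂, _, _, _, hw'⟩ := (key w t).mp ht
    exact hw ⟨_, _, hw'⟩
  have hcount : ∀ (u : List T₁) (v : List T₂),
      G.count (u.map Sum.inl ++ v.map Sum.inr) = G₁.count u * G₂.count v := by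
    intro u v
    have h1 := adm₁ u
    have h2 := adm₂ v
    rw [SignedGrammar.count, keyset,
      finsum_mem_image (fun p _ q _ h => SGC.pair_injective p q h),
      finsum_mem_congr rfl (fun p _ => SGC.sign_pair G₁.sign G₂.sign G₁.start G₂.start p.1 p.2),
      finsum_mem_eq_finite_toFinset_sum _ (h1.prod h2), ← Set.Finite.toFinset_prod h1 h2,
      Finset.sum_product, SignedGrammar.count, SignedGrammar.count,
      finsum_mem_eq_finite_toFinset_sum _ h1, finsum_mem_eq_finite_toFinset_sum _ h2,
      Finset.sum_mul_sum]
  refine ⟨G, ?_, ?_, ?_⟩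
  · intro w
    by_cases hw : ∃ (u : List T₁) (v : List T₂), w = u.map Sum.inl ++ v.map Sum.inr
    · obtain ⟨u, v, rfl⟩ := hw
      rw [keyset]
      exact ((adm₁ u).prod (adm₂ v)).image _
    · rw [hempty w hw]
      exact Set.finite_empty
  · rintro w ⟨u, hu, v, hv, rfl⟩
    rw [hcount, pos₁ u hu, pos₂ v hv, mul_one]
  · intro w hw
    by_cases hd : ∃ (u : List T₁) (v : List T₂), w = u.map Sum.inl ++ v.map Sum.inr
    · obtain ⟨u, v, rfl⟩ := hd
      rw [hcount]
      by_cases hu : u ∈ L₁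
      · have hv : v ∉ L₂ := fun hv => hw ⟨u, hu, v, hv, rfl⟩
        rw [neg₂ v hv, mul_zero]
      · rw [neg₁ u hu, zero_mul]
    · rw [SignedGrammar.count, hempty w hd, finsum_mem_empty]
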